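/- There exists a connected simple graph of order 13 with exactly 22 edges whose three metric subgraphs (central, annular, and peripheral subgraphs) are each isomorphic to a path P_m for some m ≥ 1. -/

import Mathlib

/-- Eccentricity of a vertex in a (finite connected) simple graph:
the maximum distance from `v` to any vertex. -/
noncomputable def SimpleGraph.mecc {V : Type*} (G : SimpleGraph V) (v : V) : ℕ :=
  sSup (Set.range (G.dist v))

/-- Radius: the minimum eccentricity. -/
noncomputable def SimpleGraph.mrad {V : Type*} (G : SimpleGraph V) : ℕ :=
  sInf (Set.range G.mecc)

/-- Diameter: the maximum eccentricity. -/
noncomputable def SimpleGraph.mdiam {V : Type*} (G : SimpleGraph V) : ℕ :=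
  sSup (Set.range G.mecc)

/-- The center: the set of vertices of minimum eccentricity. -/
noncomputable def SimpleGraph.mcenter {V : Type*} (G : SimpleGraph V) : Set V :=
  {v | G.mecc v = G.mrad}

/-- The annulus: the set of vertices of intermediate eccentricity. -/
noncomputable def SimpleGraph.mannulus {V : Type*} (G : SimpleGraph V) : Set V :=
  {v | G.mrad < G.mecc v ∧ G.mecc v < G.mdiam}

/-- The periphery: the set of vertices of maximum eccentricity. -/
noncomputable def SimpleGraph.mperiphery {V : Type*} (G : SimpleGraph V) : Set V :=
  {v | G.mecc v = G.mdiam}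

/-- All three metric subgraphs are (nonempty) paths. -/
noncomputable def metricSubgraphsArePaths {V : Type*} (G : SimpleGraph V) : Prop :=
  (∃ m : ℕ, 1 ≤ m ∧ Nonempty (G.induce G.mcenter ≃g SimpleGraph.pathGraph m)) ∧
  (∃ m : ℕ, 1 ≤ m ∧ Nonempty (G.induce G.mannulus ≃g SimpleGraph.pathGraph m)) ∧
  (∃ m : ℕ, 1 ≤ m ∧ Nonempty (G.induce G.mperiphery ≃g SimpleGraph.pathGraph m))

/-! ### Auxiliary construction -/

def gpairs : List (Fin 13 × Fin 13) :=
  [(0,10),(0,11),(1,5),(1,8),(2,7),(2,10),(2,11),(3,4),(3,5),(3,6),(3,8),(3,9),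
   (3,12),(4,5),(4,6),(6,7),(7,12),(8,9),(8,11),(9,11),(9,12),(10,11)]

def adjFun (a b : Fin 13) : Bool := (a,b) ∈ gpairs || (b,a) ∈ gpairs

def G13 : SimpleGraph (Fin 13) where
  Adj a b := adjFun a b
  symm := ⟨by
    intro a b h
    exact (by decide : ∀ a b : Fin 13, adjFun a b = true → adjFun b a = true) a b h⟩
  loopless := ⟨by
    intro a h
    exact (by decide : ∀ a : Fin 13, ¬ adjFun a a = true) a h⟩

instance : DecidableRel G13.Adj := fun a b => inferInstanceAs (Decidable (adjFun a b = true))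

def gball (v : Fin 13) : ℕ → Finset (Fin 13)
  | 0 => {v}
  | k+1 => gball v k ∪ Finset.univ.filter (fun u => ∃ w ∈ gball v k, G13.Adj w u)

lemma mem_gball : ∀ (k : ℕ) (v u : Fin 13),
    u ∈ gball v k ↔ ∃ p : G13.Walk u v, p.length ≤ k
  | 0, v, u => by
      simp only [gball, Finset.mem_singleton]
      constructor
      · rintro rfl; exact ⟨.nil, by simp⟩
      · rintro ⟨p, hp⟩
        exact SimpleGraph.Walk.eq_of_length_eq_zero (Nat.le_zero.mp hp)
  | k+1, v, u => by
      simp only [gball, Finset.mem_union, Finset.mem_filter, Finset.mem_univ, true_and]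
      constructor
      · rintro (h | ⟨w, hw, hadj⟩)
        · obtain ⟨p, hp⟩ := (mem_gball k v u).mp h
          exact ⟨p, hp.trans (Nat.le_succ k)⟩
        · obtain ⟨p, hp⟩ := (mem_gball k v w).mp hw
          exact ⟨.cons hadj.symm p, by simpa using Nat.succ_le_succ hp⟩
      · rintro ⟨p, hp⟩
        cases p with
        | nil => exact Or.inl ((mem_gball k v v).mpr ⟨.nil, by simp⟩)
        | cons h q =>
            exact Or.inr ⟨_, (mem_gball k v _).mpr
              ⟨q, by simpa using Nat.le_of_succ_le_succ hp⟩, h.symm⟩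

lemma gball4 : ∀ v u : Fin 13, u ∈ gball v 4 := by decide

lemma G13_conn : G13.Connected := by
  rw [SimpleGraph.connected_iff]
  refine ⟨fun u v => ?_, ⟨0⟩⟩
  obtain ⟨p, _⟩ := (mem_gball 4 v u).mp (gball4 v u)
  exact ⟨p⟩

lemma dist_le_iff {u v : Fin 13} {k : ℕ} : G13.dist u v ≤ k ↔ u ∈ gball v k := by
  rw [mem_gball]
  constructor
  · intro h
    obtain ⟨p, hp⟩ := (G13_conn u v).exists_walk_length_eq_dist
    exact ⟨p, by rw [hp]; exact h⟩
  · rintro ⟨p, hp⟩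
    exact (SimpleGraph.dist_le p).trans hp

def eTab : Fin 13 → ℕ := ![4,4,4,3,4,4,4,4,3,2,4,3,3]

lemma eUB : ∀ v u : Fin 13, u ∈ gball v (eTab v) := by decide
lemma eLB : ∀ v : Fin 13, ∃ u, u ∉ gball v (eTab v - 1) := by decide
lemma eTab_pos : ∀ v, 1 ≤ eTab v := by decide

lemma mecc_eq : ∀ v, G13.mecc v = eTab v := by
  intro v
  have hub : ∀ u, G13.dist v u ≤ eTab v := fun u => by
    rw [SimpleGraph.dist_comm]; exact dist_le_iff.mpr (eUB v u)
  have hbdd : BddAbove (Set.range (G13.dist v)) :=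
    ⟨eTab v, by rintro x ⟨u, rfl⟩; exact hub u⟩
  obtain ⟨u, hu⟩ := eLB v
  have h1 : ¬ G13.dist u v ≤ eTab v - 1 := fun h => hu (dist_le_iff.mp h)
  have hc : G13.dist u v = G13.dist v u := SimpleGraph.dist_comm
  have h2 : G13.dist v u = eTab v := by
    have := hub u; have := eTab_pos v; omega
  apply le_antisymm
  · exact csSup_le (Set.range_nonempty _) (by rintro x ⟨w, rfl⟩; exact hub w)
  · calc eTab v = G13.dist v u := h2.symm
      _ ≤ _ := le_csSup hbdd ⟨u, rfl⟩

lemma range_mecc : Set.range G13.mecc = Set.range eTab := by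
  rw [funext mecc_eq]

lemma mrad_eq : G13.mrad = 2 := by
  rw [SimpleGraph.mrad, range_mecc]
  apply le_antisymm
  · exact Nat.sInf_le ⟨9, by decide⟩
  · refine le_csInf ⟨_, ⟨9, rfl⟩⟩ ?_
    rintro x ⟨w, rfl⟩
    exact (by decide : ∀ w : Fin 13, 2 ≤ eTab w) w

lemma mdiam_eq : G13.mdiam = 4 := by
  rw [SimpleGraph.mdiam, range_mecc]
  have hb : ∀ x ∈ Set.range eTab, x ≤ 4 := by
    rintro x ⟨w, rfl⟩
    exact (by decide : ∀ w : Fin 13, eTab w ≤ 4) w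
  apply le_antisymm
  · exact csSup_le ⟨_, ⟨0, rfl⟩⟩ hb
  · exact le_csSup ⟨4, hb⟩ ⟨0, by decide⟩

lemma mcenter_eq : G13.mcenter = ({9} : Set (Fin 13)) := by
  ext v
  simp only [SimpleGraph.mcenter, Set.mem_setOf_eq, mecc_eq, mrad_eq,
    Set.mem_singleton_iff]
  exact (by decide : ∀ v : Fin 13, eTab v = 2 ↔ v = 9) v

lemma mannulus_eq : G13.mannulus = ({3, 8, 11, 12} : Set (Fin 13)) := by
  ext v
  simp only [SimpleGraph.mannulus, Set.mem_setOf_eq, mecc_eq, mrad_eq, mdiam_eq,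
    Set.mem_insert_iff, Set.mem_singleton_iff]
  exact (by decide : ∀ v : Fin 13,
    (2 < eTab v ∧ eTab v < 4) ↔ (v = 3 ∨ v = 8 ∨ v = 11 ∨ v = 12)) v

lemma mperiphery_eq : G13.mperiphery = ({0, 1, 2, 4, 5, 6, 7, 10} : Set (Fin 13)) := by
  ext v
  simp only [SimpleGraph.mperiphery, Set.mem_setOf_eq, mecc_eq, mdiam_eq,
    Set.mem_insert_iff, Set.mem_singleton_iff]
  exact (by decide : ∀ v : Fin 13,
    eTab v = 4 ↔ (v = 0 ∨ v = 1 ∨ v = 2 ∨ v = 4 ∨ v = 5 ∨ v = 6 ∨ v = 7 ∨ v = 10)) v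

instance {n : ℕ} : DecidableRel (SimpleGraph.pathGraph n).Adj := fun a b =>
  decidable_of_iff _ SimpleGraph.pathGraph_adj.symm

/-! ### Center iso -/

def centerEquiv : ({9} : Set (Fin 13)) ≃ Fin 1 where
  toFun := fun _ => 0
  invFun := fun _ => ⟨9, rfl⟩
  left_inv := fun x => Subtype.ext x.2.symm
  right_inv := fun i => Subsingleton.elim _ _

noncomputable def centerIso :
    G13.induce ({9} : Set (Fin 13)) ≃g SimpleGraph.pathGraph 1 := by
  refine ⟨centerEquiv, ?_⟩
  rintro ⟨a, ha⟩ ⟨b, hb⟩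
  have ha' : a = 9 := ha
  have hb' : b = 9 := hb
  subst ha' hb'
  exact (by decide : ((SimpleGraph.pathGraph 1).Adj 0 0 ↔ G13.Adj 9 9))

/-! ### Annulus iso -/

def fAnn : Fin 13 → Fin 4 := ![0,0,0,1,0,0,0,0,2,0,0,3,0]
def gAnn : Fin 4 → Fin 13 := ![12,3,8,11]

def annEquiv : ({3, 8, 11, 12} : Set (Fin 13)) ≃ Fin 4 where
  toFun := fun x => fAnn x.1
  invFun := fun i => ⟨gAnn i, by
    fin_cases i <;> simp only [Set.mem_insert_iff, Set.mem_singleton_iff] <;> decide⟩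
  left_inv := by
    rintro ⟨a, ha⟩
    simp only [Set.mem_insert_iff, Set.mem_singleton_iff] at ha
    rcases ha with rfl | rfl | rfl | rfl <;> rfl
  right_inv := by intro i; fin_cases i <;> rfl

lemma annKey : ∀ a b : Fin 13, (a = 3 ∨ a = 8 ∨ a = 11 ∨ a = 12) →
    (b = 3 ∨ b = 8 ∨ b = 11 ∨ b = 12) →
    ((SimpleGraph.pathGraph 4).Adj (fAnn a) (fAnn b) ↔ G13.Adj a b) := by decide

noncomputable def annulusIso :
    G13.induce ({3, 8, 11, 12} : Set (Fin 13)) ≃g SimpleGraph.pathGraph 4 := by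
  refine ⟨annEquiv, ?_⟩
  rintro ⟨a, ha⟩ ⟨b, hb⟩
  simp only [Set.mem_insert_iff, Set.mem_singleton_iff] at ha hb
  exact annKey a b ha hb

/-! ### Periphery iso -/

def fPer : Fin 13 → Fin 8 := ![7,0,5,0,2,1,3,4,0,0,6,0,0]
def gPer : Fin 8 → Fin 13 := ![1,5,4,6,7,2,10,0]

def perEquiv : ({0, 1, 2, 4, 5, 6, 7, 10} : Set (Fin 13)) ≃ Fin 8 where
  toFun := fun x => fPer x.1
  invFun := fun i => ⟨gPer i, by
    fin_cases i <;> simp only [Set.mem_insert_iff, Set.mem_singleton_iff] <;> decide⟩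
  left_inv := by
    rintro ⟨a, ha⟩
    simp only [Set.mem_insert_iff, Set.mem_singleton_iff] at ha
    rcases ha with rfl | rfl | rfl | rfl | rfl | rfl | rfl | rfl <;> rfl
  right_inv := by intro i; fin_cases i <;> rfl

lemma perKey : ∀ a b : Fin 13,
    (a = 0 ∨ a = 1 ∨ a = 2 ∨ a = 4 ∨ a = 5 ∨ a = 6 ∨ a = 7 ∨ a = 10) →
    (b = 0 ∨ b = 1 ∨ b = 2 ∨ b = 4 ∨ b = 5 ∨ b = 6 ∨ b = 7 ∨ b = 10) →
    ((SimpleGraph.pathGraph 8).Adj (fPer a) (fPer b) ↔ G13.Adj a b) := by decide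

noncomputable def peripheryIso :
    G13.induce ({0, 1, 2, 4, 5, 6, 7, 10} : Set (Fin 13)) ≃g SimpleGraph.pathGraph 8 := by
  refine ⟨perEquiv, ?_⟩
  rintro ⟨a, ha⟩ ⟨b, hb⟩
  simp only [Set.mem_insert_iff, Set.mem_singleton_iff] at ha hb
  exact perKey a b ha hb

theorem exists_graph_order_13_size_22_path_metric_subgraphs :
    ∃ G : SimpleGraph (Fin 13), G.Connected ∧ metricSubgraphsArePaths G ∧
      G.edgeSet.ncard = 22 := by
  refine ⟨G13, G13_conn, ⟨?_, ?_, ?_⟩, ?_⟩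
  · rw [mcenter_eq]; exact ⟨1, le_refl 1, ⟨centerIso⟩⟩
  · rw [mannulus_eq]; exact ⟨4, by norm_num, ⟨annulusIso⟩⟩
  · rw [mperiphery_eq]; exact ⟨8, by norm_num, ⟨peripheryIso⟩⟩
  · rw [← SimpleGraph.coe_edgeFinset, Set.ncard_coe_finset]
    decide
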